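/- Depth lower bound via conflict edges: if {(L^j, R^j)}_{j=1}^t is an independent branching scheme for CDC(𝒮) (i.e., CDC(𝒮) = ⋂_j (Q(L^j) ∪ Q(R^j))), then for every edge {u, v} of the conflict graph G^c_𝒮 there exists j with (u ∈ L^j ∖ R^j and v ∈ R^j ∖ L^j) or (v ∈ L^j ∖ R^j and u ∈ R^j ∖ L^j); in particular the pairs {(L^j ∖ R^j, R^j ∖ L^j)} restricted to conflict-graph edges cover G^c_𝒮. -/
import Mathlib


variable {J : Type*} [Fintype J] [DecidableEq J]

/-- Membership in the standard simplex `Δ^J`. -/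
def InSimplex (l : J → ℝ) : Prop := (∀ v, 0 ≤ l v) ∧ ∑ v, l v = 1

/-- `Q(S)`: the face of the standard simplex induced by `S ⊆ J`. -/
def Qface (S : Set J) (l : J → ℝ) : Prop := InSimplex l ∧ ∀ v ∉ S, l v = 0

/-- The combinatorial disjunctive constraint `CDC(𝒮) = ⋃_{S ∈ 𝒮} Q(S)`. -/
def CDC (𝒮 : Finset (Finset J)) (l : J → ℝ) : Prop := ∃ S ∈ 𝒮, Qface (↑S) l

/-- Adjacency in the conflict graph `G^c_𝒮`. -/
def ConflictAdj (𝒮 : Finset (Finset J)) (u v : J) : Prop :=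
  u ≠ v ∧ ∀ S ∈ 𝒮, ¬ (u ∈ S ∧ v ∈ S)

lemma delta_mem {𝒮 : Finset (Finset J)} (hsing : ∀ v : J, ∃ S ∈ 𝒮, v ∈ S)
    (u : J) : CDC 𝒮 (fun w => if w = u then (1:ℝ) else 0) := by
  obtain ⟨S, hS, hu⟩ := hsing u
  refine ⟨S, hS, ⟨⟨fun w => by positivity, by simp⟩, fun w hw => ?_⟩⟩
  simp only [ite_eq_right_iff]
  rintro rfl; exact absurd hu hw

/-- Depth lower bound via conflict edges: if `{(L^j, R^j)}_{j=1}^t` is an independent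
branching scheme for `CDC(𝒮)` (with every singleton feasible), then every edge `{u,v}`
of the conflict graph is separated by some level `j`, with `u` and `v` in opposite
sides `L^j ∖ R^j` and `R^j ∖ L^j`. -/
theorem IB_scheme_separates_conflict_edges (𝒮 : Finset (Finset J)) (hne : 𝒮.Nonempty)
    (hsing : ∀ v : J, ∃ S ∈ 𝒮, v ∈ S)
    (t : ℕ) (L R : Fin t → Set J)
    (hIB : ∀ l : J → ℝ, CDC 𝒮 l ↔ (InSimplex l ∧ ∀ j, Qface (L j) l ∨ Qface (R j) l)) :
    ∀ u v : J, ConflictAdj 𝒮 u v →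
      ∃ j, (u ∈ L j ∧ u ∉ R j ∧ v ∈ R j ∧ v ∉ L j) ∨
           (v ∈ L j ∧ v ∉ R j ∧ u ∈ R j ∧ u ∉ L j) := by
  intro u v ⟨huv, hconf⟩
  -- singleton points give: for each j, u ∈ L j ∨ u ∈ R j (same for v)
  have hside : ∀ w : J, ∀ j, w ∈ L j ∨ w ∈ R j := by
    intro w j
    have := ((hIB _).mp (delta_mem hsing w)).2 j
    rcases this with ⟨_, h⟩ | ⟨_, h⟩
    · left; by_contra hw; simpa using h w hw
    · right; by_contra hw; simpa using h w hw
  -- the midpoint of u, v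
  set l : J → ℝ := fun w => (if w = u then (1:ℝ)/2 else 0) + (if w = v then (1:ℝ)/2 else 0)
    with hl
  have hlsimp : InSimplex l := by
    constructor
    · intro w; positivity
    · simp [hl, Finset.sum_add_distrib]; norm_num
  have hlu : l u = 1/2 := by simp [hl, huv]
  have hlv : l v = 1/2 := by simp [hl, huv.symm]
  have hnot : ¬ CDC 𝒮 l := by
    rintro ⟨S, hS, _, hsupp⟩
    refine hconf S hS ⟨?_, ?_⟩
    · by_contra h; rw [hsupp u (by simpa using h)] at hlu; norm_num at hlu
    · by_contra h; rw [hsupp v (by simpa using h)] at hlv; norm_num at hlv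
  rw [hIB] at hnot
  push_neg at hnot
  obtain ⟨j, hj⟩ := hnot hlsimp
  rcases hj with ⟨hjL, hjR⟩
  have hL : u ∉ L j ∨ v ∉ L j := by
    by_contra h; push_neg at h
    exact hjL ⟨hlsimp, fun w hw => by
      simp only [hl]
      rw [if_neg (fun e : w = u => hw (e ▸ h.1)), if_neg (fun e : w = v => hw (e ▸ h.2))]; ring⟩
  have hR : u ∉ R j ∨ v ∉ R j := by
    by_contra h; push_neg at h
    exact hjR ⟨hlsimp, fun w hw => by
      simp only [hl]
      rw [if_neg (fun e : w = u => hw (e ▸ h.1)), if_neg (fun e : w = v => hw (e ▸ h.2))]; ring⟩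
  refine ⟨j, ?_⟩
  rcases hside u j with hu | hu <;> rcases hside v j with hv | hv
  · exact absurd hL (by simp [hu, hv])
  · left
    refine ⟨hu, ?_, hv, ?_⟩
    · rcases hR with h | h; exact h; exact absurd hv h
    · rcases hL with h | h; exact absurd hu h; exact h
  · right
    refine ⟨hv, ?_, hu, ?_⟩
    · rcases hR with h | h; exact absurd hu h; exact h
    · rcases hL with h | h; exact h; exact absurd hv h
  · exact absurd hR (by simp [hu, hv])
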